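/- Let T be a rooted tree and M ⊆ V(T). Let M' = lcac(M) be the LCA-closure of M, obtained by iteratively adding to M the lowest common ancestor of any two vertices of the current set until closed. Then |M'| ≤ 2|M| and for every connected component C of T − M', we have |N_T(C)| ≤ 2. -/

import Mathlib

/-- Open neighborhood of a vertex set. -/
def openNbhd {V : Type*} (G : SimpleGraph V) (S : Set V) : Set V :=
  {v | v ∉ S ∧ ∃ u ∈ S, G.Adj u v}

/-- In a tree `T` rooted at `r`, `x` is an ancestor of `y` if `x` lies on the
(unique) path from `r` to `y`. -/
def IsAncestor {V : Type*} (T : SimpleGraph V) (r x y : V) : Prop :=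
  ∃ p : T.Walk r y, p.IsPath ∧ x ∈ p.support

/-- `w` is the lowest common ancestor of `x` and `y` in the tree `T` rooted at `r`. -/
def IsLCA {V : Type*} (T : SimpleGraph V) (r w x y : V) : Prop :=
  IsAncestor T r w x ∧ IsAncestor T r w y ∧
    ∀ w', IsAncestor T r w' x → IsAncestor T r w' y → IsAncestor T r w' w

/-- A set is LCA-closed if it contains the LCA of any two of its elements. -/
def LCAClosed {V : Type*} (T : SimpleGraph V) (r : V) (A : Set V) : Prop :=
  ∀ x ∈ A, ∀ y ∈ A, ∀ w, IsLCA T r w x y → w ∈ A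

/-- The LCA-closure of `M`: the smallest superset of `M` closed under LCAs. -/
def lcac {V : Type*} (T : SimpleGraph V) (r : V) (M : Set V) : Set V :=
  ⋂₀ {A : Set V | M ⊆ A ∧ LCAClosed T r A}

set_option linter.unusedSectionVars false
namespace LCAWork

open SimpleGraph Walk

variable {V : Type*} [DecidableEq V] {T : SimpleGraph V} {r : V}

section Basic

variable (htree : T.IsTree)

/-- The unique path from the root to `x`. -/
noncomputable def rp (x : V) : T.Walk r x := (htree.existsUnique_path r x).choose

lemma rp_isPath (x : V) : (rp htree x (r := r)).IsPath :=
  (htree.existsUnique_path r x).choose_spec.1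

lemma rp_unique {x : V} (p : T.Walk r x) (hp : p.IsPath) : p = rp htree x :=
  (htree.existsUnique_path r x).choose_spec.2 p hp

/-- Ancestor relation via the canonical root path. -/
def Anc (r : V) (x y : V) : Prop := x ∈ (rp htree y (r := r)).support

lemma isAncestor_iff {x y : V} : IsAncestor T r x y ↔ Anc htree r x y := by
  constructor
  · rintro ⟨p, hp, hx⟩
    rwa [rp_unique htree p hp] at hx
  · intro h
    exact ⟨rp htree y, rp_isPath htree y, h⟩

lemma anc_refl (x : V) : Anc htree r x x := end_mem_support _

lemma anc_root (x : V) : Anc htree r r x := start_mem_support _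

lemma takeUntil_rp {x y : V} (h : Anc htree r x y) :
    (rp htree y).takeUntil x h = rp htree x :=
  rp_unique htree _ ((rp_isPath htree y).takeUntil h)

lemma anc_trans {x y z : V} (hxy : Anc htree r x y) (hyz : Anc htree r y z) :
    Anc htree r x z := by
  have := takeUntil_rp htree hyz
  have hx : x ∈ ((rp htree z).takeUntil y hyz).support := by rw [this]; exact hxy
  exact support_takeUntil_subset _ _ hx

/-- Key order lemma: anything at or after `w` on the root path of `x` is a
descendant of `w`. -/
lemma anc_of_mem_dropUntil {x w v : V} (hw : Anc htree r w x)
    (hv : v ∈ ((rp htree x).dropUntil w hw).support) : Anc htree r w v := by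
  set p := rp htree x with hp
  set q := p.dropUntil w hw with hq
  have hqpath : q.IsPath := (rp_isPath htree x).dropUntil hw
  have hppath : p.IsPath := rp_isPath htree x
  -- the concatenation (p.takeUntil w) ++ (q.takeUntil v) is a path from r to v
  have hsplit : (p.takeUntil w hw).append q = p := take_spec p hw
  have hnodup : ((p.takeUntil w hw).support ++ q.support.tail).Nodup := by
    rw [← support_append, hsplit]; exact hppath.2
  have htails : q.support.tail.Nodup := by
    have h := (isPath_def q).mp hqpath
    rw [support_eq_cons q] at h
    exact (List.nodup_cons.mp h).2
  have hPpath : ((p.takeUntil w hw).append (q.takeUntil v hv)).IsPath := by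
    rw [isPath_def, support_append, List.nodup_append]
    refine ⟨(hppath.takeUntil hw).2, ?_, ?_⟩
    · -- tail of support of q.takeUntil v is nodup
      have := (hqpath.takeUntil hv).2
      rw [support_eq_cons] at this
      exact (List.nodup_cons.mp this).2
    · intro z hz1 y hz2 hzy
      rw [← hzy] at hz2
      have hz2' : z ∈ q.support.tail := by
        have hzq : z ∈ (q.takeUntil v hv).support := List.mem_of_mem_tail hz2
        have hzq2 : z ∈ q.support := support_takeUntil_subset _ _ hzq
        rw [support_eq_cons q] at hzq2
        rcases List.mem_cons.mp hzq2 with rfl | h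
        · -- z = w : but w not in tail of (q.takeUntil v).support
          exfalso
          have hnd := (hqpath.takeUntil hv).2
          rw [support_eq_cons (q.takeUntil v hv)] at hnd
          exact (List.nodup_cons.mp hnd).1 hz2
        · exact h
      rw [List.nodup_append] at hnodup
      exact hnodup.2.2 z hz1 z hz2' rfl
  have huniq := rp_unique htree _ hPpath
  show w ∈ (rp htree v).support
  rw [← huniq, mem_support_append_iff]
  exact Or.inl (end_mem_support _)

lemma anc_total {x y z : V} (hx : Anc htree r x z) (hy : Anc htree r y z) :
    Anc htree r x y ∨ Anc htree r y x := by
  set p := rp htree z with hp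
  have hsplit := take_spec p hx
  have : y ∈ ((p.takeUntil x hx).append (p.dropUntil x hx)).support := by
    rw [hsplit]; exact hy
  rw [mem_support_append_iff] at this
  rcases this with h | h
  · right
    have := takeUntil_rp htree hx
    show y ∈ (rp htree x).support
    rwa [← this]
  · left
    exact anc_of_mem_dropUntil htree hx h

lemma anc_antisymm {x y : V} (hxy : Anc htree r x y) (hyx : Anc htree r y x) :
    x = y := by
  -- y is in support of rp x = (rp y).takeUntil x, and also the end of rp y
  have h1 : y ∈ ((rp htree y).takeUntil x hxy).support := by
    rw [takeUntil_rp htree hxy]; exact hyx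
  have hnodup : (((rp htree y).takeUntil x hxy).support ++
      ((rp htree y).dropUntil x hxy).support.tail).Nodup := by
    rw [← support_append, take_spec (rp htree y) hxy]; exact (rp_isPath htree y).2
  by_contra hne
  have h2 : y ∈ ((rp htree y).dropUntil x hxy).support.tail := by
    have := end_mem_support ((rp htree y).dropUntil x hxy)
    rw [support_eq_cons] at this
    rcases List.mem_cons.mp this with h | h
    · exact absurd h.symm hne
    · exact h
  rw [List.nodup_append] at hnodup
  exact hnodup.2.2 y h1 y h2 rfl

end Basic

end LCAWork

namespace LCAWork
open SimpleGraph Walk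

variable {V : Type*} [DecidableEq V] {T : SimpleGraph V} {r : V}

section Depth
variable [Fintype V] (htree : T.IsTree)
include htree

noncomputable def depth (r x : V) : ℕ := (rp htree x (r := r)).length

lemma depth_le_of_anc {x y : V} (h : Anc htree r x y) :
    depth htree r x ≤ depth htree r y := by
  have := takeUntil_rp htree h
  calc (rp htree x (r := r)).length = ((rp htree y).takeUntil x h).length := by rw [this]
    _ ≤ (rp htree y (r := r)).length := length_takeUntil_le _ _

lemma eq_of_anc_of_depth_le {x y : V} (h : Anc htree r x y)
    (hd : depth htree r y ≤ depth htree r x) : x = y := by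
  have hsplit := take_spec (rp htree y) h
  have hlen : ((rp htree y).takeUntil x h).length + ((rp htree y).dropUntil x h).length
      = (rp htree y (r := r)).length := by
    rw [← length_append, hsplit]
  rw [takeUntil_rp htree h] at hlen
  have : ((rp htree y).dropUntil x h).length = 0 := by
    unfold depth at hd; omega
  exact eq_of_length_eq_zero this

/-- Existence of LCA (in the `Anc` formulation). -/
lemma exists_lca (x y : V) : ∃ w, Anc htree r w x ∧ Anc htree r w y ∧
    ∀ w', Anc htree r w' x → Anc htree r w' y → Anc htree r w' w := by
  classical
  set S : Set V := {w | Anc htree r w x ∧ Anc htree r w y} with hS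
  have hfin : S.Finite := S.toFinite
  have hne : S.Nonempty := ⟨r, anc_root htree x, anc_root htree y⟩
  obtain ⟨w, hwS, hwmax⟩ := Set.exists_max_image S (depth htree r) hfin hne
  refine ⟨w, hwS.1, hwS.2, ?_⟩
  intro w' hw'x hw'y
  have hw'S : w' ∈ S := ⟨hw'x, hw'y⟩
  rcases anc_total htree hw'x hwS.1 with h | h
  · exact h
  · have := eq_of_anc_of_depth_le htree h (hwmax w' hw'S)
    rw [this]; exact anc_refl htree w'

/-- `IsLCA` in terms of `Anc`. -/
lemma isLCA_iff {w x y : V} : IsLCA T r w x y ↔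
    (Anc htree r w x ∧ Anc htree r w y ∧
      ∀ w', Anc htree r w' x → Anc htree r w' y → Anc htree r w' w) := by
  unfold IsLCA
  simp only [isAncestor_iff htree]

lemma isLCA_unique {w w' x y : V} (h : IsLCA T r w x y) (h' : IsLCA T r w' x y) :
    w = w' := by
  rw [isLCA_iff htree] at h h'
  exact anc_antisymm htree (h'.2.2 w h.1 h.2.1) (h.2.2 w' h'.1 h'.2.1)

lemma isLCA_exists (x y : V) : ∃ w, IsLCA T r w x y := by
  obtain ⟨w, h1, h2, h3⟩ := exists_lca htree x y
  exact ⟨w, (isLCA_iff htree).mpr ⟨h1, h2, h3⟩⟩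

lemma isLCA_self_left {x y : V} (h : Anc htree r x y) : IsLCA T r x x y := by
  rw [isLCA_iff htree]
  exact ⟨anc_refl htree x, h, fun w' hw'x _ => hw'x⟩

end Depth
end LCAWork

namespace LCAWork
open SimpleGraph Walk

variable {V : Type*} [DecidableEq V] {T : SimpleGraph V} {r : V}

lemma isLCA_comm {w x y : V} (h : IsLCA T r w x y) : IsLCA T r w y x :=
  ⟨h.2.1, h.1, fun w' h1 h2 => h.2.2 w' h2 h1⟩

lemma subset_lcac (M : Set V) : M ⊆ lcac T r M := fun v hv A hA => hA.1 hv

lemma lcac_closed (M : Set V) : LCAClosed T r (lcac T r M) := by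
  intro x hx y hy w hw A hA
  exact hA.2 x (hx A hA) y (hy A hA) w hw

lemma lcac_subset {M A : Set V} (h1 : M ⊆ A) (h2 : LCAClosed T r A) :
    lcac T r M ⊆ A := Set.sInter_subset_of_mem ⟨h1, h2⟩

section Closure
variable [Fintype V] (htree : T.IsTree)
include htree

lemma lca_eq_self_right {w x y : V} (hyx : Anc htree r y x) (h : IsLCA T r w x y) :
    w = y := isLCA_unique htree h (isLCA_comm (isLCA_self_left htree hyx))

lemma lcac_singleton_closed (x : V) : LCAClosed T r {x} := by
  intro u hu v hv w hw
  rw [Set.mem_singleton_iff] at hu hv ⊢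
  subst hu; subst hv
  exact lca_eq_self_right htree (anc_refl htree _) hw

/-- The key step: inserting a vertex grows the LCA-closure by at most 2. -/
lemma lcac_insert_subset (x : V) (M : Set V) (hM : (lcac T r M).Nonempty) :
    ∃ d, lcac T r (insert x M) ⊆ insert x (insert d (lcac T r M)) := by
  classical
  set Mc := lcac T r M with hMc
  have hclosed : LCAClosed T r Mc := lcac_closed M
  set D : Set V := {w | ∃ m ∈ Mc, IsLCA T r w x m} with hD
  have hDne : D.Nonempty := by
    obtain ⟨m0, hm0⟩ := hM
    obtain ⟨w, hw⟩ := isLCA_exists htree (r := r) x m0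
    exact ⟨w, m0, hm0, hw⟩
  have hDanc : ∀ w ∈ D, Anc htree r w x := by
    rintro w ⟨m, hm, hw⟩
    exact ((isLCA_iff htree).mp hw).1
  obtain ⟨d, hdD, hdmax'⟩ := Set.exists_max_image D (depth htree r) D.toFinite hDne
  have hdmax : ∀ a ∈ D, Anc htree r a d := by
    intro a ha
    rcases anc_total htree (hDanc a ha) (hDanc d hdD) with h | h
    · exact h
    · rw [eq_of_anc_of_depth_le htree h (hdmax' a ha)]
      exact anc_refl htree a
  obtain ⟨m0, hm0, hdlca⟩ := hdD
  rw [isLCA_iff htree] at hdlca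
  obtain ⟨hdx, hdm0, -⟩ := hdlca
  -- the two substantial closure cases
  have key : ∀ m ∈ Mc, ∀ w, IsLCA T r w x m → w ∈ insert d Mc := by
    intro m hm w hw
    have hwD : w ∈ D := ⟨m, hm, hw⟩
    have hwd : Anc htree r w d := hdmax w hwD
    rw [isLCA_iff htree] at hw
    obtain ⟨hwx, hwm, hwmax⟩ := hw
    obtain ⟨b, hblca⟩ := isLCA_exists htree (r := r) m m0
    have hbMc : b ∈ Mc := hclosed m hm m0 hm0 b hblca
    rw [isLCA_iff htree] at hblca
    obtain ⟨hbm, hbm0, hbmax⟩ := hblca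
    have hwb : Anc htree r w b := hbmax w hwm (anc_trans htree hwd hdm0)
    rcases anc_total htree hbm0 hdm0 with hbd | hdb
    · have hbw : Anc htree r b w := hwmax b (anc_trans htree hbd hdx) hbm
      right; rwa [anc_antisymm htree hwb hbw]
    · have hdm : Anc htree r d m := anc_trans htree hdb hbm
      have hdw : Anc htree r d w := hwmax d hdx hdm
      left; exact anc_antisymm htree hwd hdw
  have key2 : ∀ m ∈ Mc, ∀ w, IsLCA T r w d m → w ∈ insert d Mc := by
    intro m hm w hw
    rw [isLCA_iff htree] at hw
    obtain ⟨hwd, hwm, hwmax⟩ := hw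
    obtain ⟨c, hclca⟩ := isLCA_exists htree (r := r) m0 m
    have hcMc : c ∈ Mc := hclosed m0 hm0 m hm c hclca
    rw [isLCA_iff htree] at hclca
    obtain ⟨hcm0, hcm, hcmax⟩ := hclca
    have hwc : Anc htree r w c := hcmax w (anc_trans htree hwd hdm0) hwm
    rcases anc_total htree hcm0 hdm0 with hcd | hdc
    · have hcw : Anc htree r c w := hwmax c hcd hcm
      right; rwa [anc_antisymm htree hwc hcw]
    · have hdm : Anc htree r d m := anc_trans htree hdc hcm
      have hdw : Anc htree r d w := hwmax d (anc_refl htree d) hdm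
      left; exact anc_antisymm htree hwd hdw
  refine ⟨d, lcac_subset ?_ ?_⟩
  · intro v hv
    rcases hv with rfl | hv
    · exact Set.mem_insert _ _
    · exact Set.mem_insert_of_mem _ (Set.mem_insert_of_mem _ (subset_lcac M hv))
  · -- closedness of insert x (insert d Mc)
    intro u hu v hv w hw
    have symm_case : ∀ u v, u ∈ insert x (insert d Mc) → v ∈ insert x (insert d Mc) → True := fun _ _ _ _ => trivial
    clear symm_case
    rcases hu with rfl | hu
    · -- u = x
      rcases hv with rfl | hv
      · rw [lca_eq_self_right htree (anc_refl htree _) hw]; exact Set.mem_insert _ _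
      rcases hv with rfl | hv
      · rw [lca_eq_self_right htree hdx hw]
        exact Set.mem_insert_of_mem _ (Set.mem_insert _ _)
      · exact Set.mem_insert_of_mem _ (key v hv w hw)
    rcases hu with rfl | hu
    · -- u = d
      rcases hv with rfl | hv
      · rw [lca_eq_self_right htree hdx (isLCA_comm hw)]
        exact Set.mem_insert_of_mem _ (Set.mem_insert _ _)
      rcases hv with rfl | hv
      · rw [lca_eq_self_right htree (anc_refl htree _) hw]
        exact Set.mem_insert_of_mem _ (Set.mem_insert _ _)
      · exact Set.mem_insert_of_mem _ (key2 v hv w hw)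
    · -- u ∈ Mc
      rcases hv with rfl | hv
      · exact Set.mem_insert_of_mem _ (key u hu w (isLCA_comm hw))
      rcases hv with rfl | hv
      · exact Set.mem_insert_of_mem _ (key2 u hu w (isLCA_comm hw))
      · exact Set.mem_insert_of_mem _ (Set.mem_insert_of_mem _ (hclosed u hu v hv w hw))

lemma lcac_card_bound (M : Set V) : (lcac T r M).ncard ≤ 2 * M.ncard := by
  classical
  refine Set.Finite.induction_on (s := M) M.toFinite ?_ ?_
  ·
    have : lcac T r (∅ : Set V) ⊆ ∅ := lcac_subset Set.Subset.rfl (by intro u hu; exact hu.elim)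
    simp [Set.eq_empty_of_subset_empty this]
  · intro a s ha hs ih
    rcases Set.eq_empty_or_nonempty (lcac T r s) with hemp | hne
    · have hsub : lcac T r (insert a s) ⊆ {a} := by
        apply lcac_subset ?_ (lcac_singleton_closed htree a)
        intro v hv
        rcases hv with rfl | hv
        · rfl
        · exact absurd (hemp ▸ subset_lcac s hv) (Set.notMem_empty v)
      calc (lcac T r (insert a s)).ncard ≤ ({a} : Set V).ncard :=
              Set.ncard_le_ncard hsub (Set.toFinite _)
        _ = 1 := Set.ncard_singleton a
        _ ≤ 2 * (insert a s).ncard := by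
            have : 1 ≤ (insert a s).ncard := by
              exact (Set.ncard_pos (Set.toFinite _)).mpr ⟨a, Set.mem_insert _ _⟩
            omega
    · obtain ⟨d, hd⟩ := lcac_insert_subset htree a s hne
      have h1 : (lcac T r (insert a s)).ncard ≤ (insert a (insert d (lcac T r s))).ncard :=
        Set.ncard_le_ncard hd (Set.toFinite _)
      have h2 : (insert a (insert d (lcac T r s))).ncard ≤ (lcac T r s).ncard + 2 := by
        calc (insert a (insert d (lcac T r s))).ncard
            ≤ (insert d (lcac T r s)).ncard + 1 := Set.ncard_insert_le _ _
          _ ≤ (lcac T r s).ncard + 1 + 1 := by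
              have := Set.ncard_insert_le d (lcac T r s)
              omega
          _ = (lcac T r s).ncard + 2 := by omega
      have h3 : (insert a s).ncard = s.ncard + 1 := Set.ncard_insert_of_notMem ha (Set.toFinite _)
      omega

end Closure
end LCAWork

namespace LCAWork
open SimpleGraph Walk

variable {V : Type*} [DecidableEq V] {T : SimpleGraph V} {r : V}

section Paths
variable [Fintype V] (htree : T.IsTree)
include htree

/-- The LCA of `x` and `y` lies on any (hence the unique) path from `x` to `y`. -/
lemma lca_mem_path_support {w x y : V} (h1 : Anc htree r w x) (h2 : Anc htree r w y)
    (hmax : ∀ w', Anc htree r w' x → Anc htree r w' y → Anc htree r w' w)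
    {Q : T.Walk x y} (hQ : Q.IsPath) : w ∈ Q.support := by
  classical
  set q1 := (rp htree x).dropUntil w h1 with hq1
  set q2 := (rp htree y).dropUntil w h2 with hq2
  have hq1p : q1.IsPath := (rp_isPath htree x).dropUntil h1
  have hq2p : q2.IsPath := (rp_isPath htree y).dropUntil h2
  set P : T.Walk x y := q1.reverse.append q2 with hP
  have hPpath : P.IsPath := by
    rw [isPath_def, support_append, support_reverse, List.nodup_append]
    refine ⟨List.nodup_reverse.mpr ((isPath_def q1).mp hq1p), ?_, ?_⟩
    · have h := (isPath_def q2).mp hq2p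
      rw [support_eq_cons q2] at h
      exact (List.nodup_cons.mp h).2
    · intro z hz1 y' hz2 hzy'
      rw [← hzy'] at hz2
      have hz1' : z ∈ q1.support := List.mem_reverse.mp hz1
      have hz2' : z ∈ q2.support := List.mem_of_mem_tail hz2
      have hzx : Anc htree r z x := support_dropUntil_subset _ h1 hz1'
      have hzy : Anc htree r z y := support_dropUntil_subset _ h2 hz2'
      have hzw : Anc htree r z w := hmax z hzx hzy
      have hwz : Anc htree r w z := anc_of_mem_dropUntil htree h1 hz1'
      have : z = w := anc_antisymm htree hzw hwz
      subst this
      have h := (isPath_def q2).mp hq2p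
      rw [support_eq_cons q2] at h
      exact (List.nodup_cons.mp h).1 hz2
  have hQP : Q = P := (htree.existsUnique_path x y).unique hQ hPpath
  rw [hQP, hP, mem_support_append_iff]
  exact Or.inr (start_mem_support q2)

/-- If `a` is a strict ancestor of `b` and `b` an ancestor of `c`, then `b` lies on
the unique path from `a` to `c`. -/
lemma mem_path_of_anc_between {a b c : V} (hab : Anc htree r a b) (hbc : Anc htree r b c)
    (hne : a ≠ b) {Q : T.Walk a c} (hQ : Q.IsPath) : b ∈ Q.support := by
  have hac : Anc htree r a c := anc_trans htree hab hbc
  have hQ' : Q = (rp htree c).dropUntil a hac :=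
    (htree.existsUnique_path a c).unique hQ ((rp_isPath htree c).dropUntil hac)
  have hbsupp : b ∈ ((rp htree c).takeUntil a hac).support
      ∨ b ∈ ((rp htree c).dropUntil a hac).support := by
    rw [← mem_support_append_iff, take_spec (rp htree c) hac]
    exact hbc
  rcases hbsupp with h | h
  · exfalso
    rw [takeUntil_rp htree hac] at h
    exact hne (anc_antisymm htree hab h)
  · rwa [hQ']

end Paths
end LCAWork

open LCAWork SimpleGraph Walk in
theorem lca_closure_bound {V : Type*} [Fintype V] (T : SimpleGraph V) (r : V)
    (htree : T.IsTree) (M : Set V) :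
    (lcac T r M).ncard ≤ 2 * M.ncard ∧
      ∀ C : (T.induce (lcac T r M)ᶜ).ConnectedComponent,
        (openNbhd T (Subtype.val '' C.supp)).ncard ≤ 2 := by
  classical
  refine ⟨lcac_card_bound htree M, ?_⟩
  intro C
  by_contra hcard
  push_neg at hcard
  set S : Set V := Subtype.val '' C.supp with hS
  set N : Set V := openNbhd T S with hN
  -- S is disjoint from the closure
  have hSM : ∀ z ∈ S, z ∉ (lcac T r M) := by
    rintro z ⟨⟨z', hz'⟩, -, rfl⟩
    exact hz'
  -- neighbors of the component lie in the closure
  have hNM : N ⊆ (lcac T r M) := by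
    rintro v ⟨hvS, u, huS, hadj⟩
    by_contra hv
    obtain ⟨u', hu', rfl⟩ := huS
    have hadj' : (T.induce (lcac T r M)ᶜ).Adj u' ⟨v, hv⟩ := hadj
    have hreach : (T.induce (lcac T r M)ᶜ).Reachable u' ⟨v, hv⟩ := hadj'.reachable
    have : (⟨v, hv⟩ : ↥((lcac T r M)ᶜ : Set V)) ∈ C.supp := by
      rw [ConnectedComponent.mem_supp_iff] at hu' ⊢
      rw [← hu']
      exact (ConnectedComponent.sound hreach.symm)
    exact hvS ⟨⟨v, hv⟩, this, rfl⟩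
  -- unique paths between neighbors stay in {a, b} ∪ S
  have hpath : ∀ a ∈ N, ∀ b ∈ N, ∃ Q : T.Walk a b, Q.IsPath ∧
      ∀ z ∈ Q.support, z = a ∨ z = b ∨ z ∈ S := by
    rintro a ⟨haS, ua, huaS, hadja⟩ b ⟨hbS, ub, hubS, hadjb⟩
    obtain ⟨ua', hua', rfl⟩ := huaS
    obtain ⟨ub', hub', rfl⟩ := hubS
    rw [ConnectedComponent.mem_supp_iff] at hua' hub'
    have hreach : (T.induce (lcac T r M)ᶜ).Reachable ua' ub' :=
      ConnectedComponent.exact (hua'.trans hub'.symm)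
    obtain ⟨W0⟩ := hreach
    have hW0S : ∀ z' ∈ W0.support, (z' : V) ∈ S := by
      intro z' hz'
      refine ⟨z', ?_, rfl⟩
      rw [ConnectedComponent.mem_supp_iff, ← hua']
      obtain ⟨q, q', -⟩ := Walk.mem_support_iff_exists_append.mp hz'
      exact (ConnectedComponent.sound ⟨q⟩).symm
    set Wm : T.Walk (ua' : V) (ub' : V) := W0.map (Embedding.induce (lcac T r M)ᶜ).toHom with hWm
    have hWmS : ∀ z ∈ Wm.support, z ∈ S := by
      intro z hz
      replace hz : z ∈ (W0.map (Embedding.induce (lcac T r M)ᶜ).toHom).support := hz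
      rw [Walk.support_map] at hz
      obtain ⟨z', hz', rfl⟩ := List.mem_map.mp hz
      exact hW0S z' hz'
    set W : T.Walk a b := (Walk.cons hadja.symm Wm).concat hadjb with hW
    refine ⟨W.bypass, W.bypass_isPath, ?_⟩
    intro z hz
    have hzW : z ∈ W.support := W.support_bypass_subset hz
    rw [hW, Walk.support_concat, Walk.support_cons] at hzW
    rw [List.mem_append] at hzW
    rcases hzW with h | h
    · rcases List.mem_cons.mp h with rfl | h
      · exact Or.inl rfl
      · exact Or.inr (Or.inr (hWmS z h))
    · exact Or.inr (Or.inl (List.mem_singleton.mp h))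
  -- any two neighbors are ancestry-comparable
  have hcomp : ∀ a ∈ N, ∀ b ∈ N, Anc htree r a b ∨ Anc htree r b a := by
    intro a ha b hb
    obtain ⟨w, hw1, hw2, hw3⟩ := exists_lca htree (r := r) a b
    have hwMc : w ∈ (lcac T r M) :=
      lcac_closed M a (hNM ha) b (hNM hb) w ((isLCA_iff htree).mpr ⟨hw1, hw2, hw3⟩)
    obtain ⟨Q, hQ, hQsupp⟩ := hpath a ha b hb
    rcases hQsupp w (lca_mem_path_support htree hw1 hw2 hw3 hQ) with rfl | rfl | hwS
    · exact Or.inl hw2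
    · exact Or.inr hw1
    · exact absurd hwMc (hSM w hwS)
  -- no vertex of the closure strictly between two neighbors
  have hmid : ∀ x y z : V, x ∈ N → y ∈ N → z ∈ N → x ≠ y → y ≠ z → x ≠ z →
      Anc htree r x y → Anc htree r y z → False := by
    intro x y z hx hy hz hxy hyz hxz haxy hayz
    obtain ⟨Q, hQ, hQsupp⟩ := hpath x hx z hz
    rcases hQsupp y (mem_path_of_anc_between htree haxy hayz hxy hQ) with rfl | rfl | hyS
    · exact hxy rfl
    · exact hyz rfl
    · exact (hSM y hyS) (hNM hy)
  -- conclude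
  have hcard' : 3 ≤ N.ncard := by omega
  obtain ⟨t, htsub, htcard⟩ := Set.exists_subset_card_eq (s := N) hcard'
  obtain ⟨a, b, c, hab, hac, hbc, rfl⟩ := Set.ncard_eq_three.mp htcard
  have ha : a ∈ N := htsub (by simp)
  have hb : b ∈ N := htsub (by simp)
  have hc : c ∈ N := htsub (by simp)
  rcases hcomp a ha b hb with h1 | h1
  · rcases hcomp b hb c hc with h2 | h2
    · exact hmid a b c ha hb hc hab hbc hac h1 h2
    · rcases hcomp a ha c hc with h3 | h3
      · exact hmid a c b ha hc hb hac (Ne.symm hbc) hab h3 h2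
      · exact hmid c a b hc ha hb (Ne.symm hac) hab (Ne.symm hbc) h3 h1
  · rcases hcomp b hb c hc with h2 | h2
    · rcases hcomp a ha c hc with h3 | h3
      · exact hmid b a c hb ha hc (Ne.symm hab) hac hbc h1 h3
      · exact hmid b c a hb hc ha hbc (Ne.symm hac) (Ne.symm hab) h2 h3
    · exact hmid c b a hc hb ha (Ne.symm hbc) (Ne.symm hab) (Ne.symm hac) h2 h1
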